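/- Let V be a partial order viewed as a category, ♭ : V → V monotone with ♭(v) ≤ v and ♭(♭(v)) = ♭(v), and let J be the quantization Grothendieck topology on V. Let b : V ⥤ V denote the functor induced by ♭. Then for every presheaf F : V^op ⥤ Type, the presheaf ♭*F := b.op ⋙ F (so (♭*F)(v) = F(♭(v)), with restriction maps (♭*F)(v' ⟶ v) = F(♭(v') ⟶ ♭(v))) is a sheaf for J. -/

import Mathlib

open CategoryTheory

/-- The quantization Grothendieck topology on a partial order `V` induced by a
monotone idempotent deflation `♭ : V → V`: a sieve on `v` covers iff it contains
the morphism `♭(v) ⟶ v`. -/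
def quantTopology {V : Type*} [PartialOrder V] {b : V → V} (hb : Monotone b)
    (hle : ∀ v, b v ≤ v) (hidem : ∀ v, b (b v) = b v) :
    GrothendieckTopology V where
  sieves v := { S | S.arrows (homOfLE (hle v)) }
  top_mem' v := trivial
  pullback_stable' := by
    intro v v' S f hS
    exact S.downward_closed hS (homOfLE (hb (leOfHom f)))
  transitive' := by
    intro v S hS R hR
    have key : ∀ {x y : V} (_ : x = y) (hx : x ≤ v) (hy : y ≤ v),
        R.arrows (homOfLE hx) → R.arrows (homOfLE hy) := by
      rintro x y rfl hx hy h
      exact h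
    exact key (hidem v) ((hle (b v)).trans (hle v)) (hle v) (hR hS)


open Opposite

lemma res_res {V : Type*} [PartialOrder V] (F : Vᵒᵖ ⥤ Type*) {u v w : V}
    (h1 : v ≤ u) (h2 : w ≤ v) (a : F.obj (op u)) :
    F.map (homOfLE h2).op (F.map (homOfLE h1).op a)
      = F.map (homOfLE (h2.trans h1)).op a := by
  rw [← FunctorToTypes.map_comp_apply, ← op_comp, homOfLE_comp]

lemma res_self {V : Type*} [PartialOrder V] (F : Vᵒᵖ ⥤ Type*) {u : V}
    (h : u ≤ u) (a : F.obj (op u)) : F.map (homOfLE h).op a = a := by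
  have : homOfLE h = 𝟙 u := rfl
  rw [this, op_id, FunctorToTypes.map_id_apply]

/-- For every presheaf `F : Vᵒᵖ ⥤ Type`, the presheaf
`♭*F = b.op ⋙ F` (with `(♭*F)(v) = F(♭(v))`) is a sheaf for the quantization
Grothendieck topology. -/
theorem isSheaf_flatStar
    {V : Type*} [PartialOrder V] {b : V → V} (hb : Monotone b)
    (hle : ∀ v, b v ≤ v) (hidem : ∀ v, b (b v) = b v)
    (F : Vᵒᵖ ⥤ Type*) :
    Presieve.IsSheaf (quantTopology hb hle hidem) (hb.functor.op ⋙ F) := by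
  intro X S hS x hx
  have hg : S.arrows (homOfLE (hle X)) := hS
  set g : b X ⟶ X := homOfLE (hle X) with hgdef
  refine ⟨F.map (homOfLE (le_of_eq (hidem X).symm)).op (x g hg), ?_, ?_⟩
  · intro Y f hf
    have comp := hx (f₁ := g) (f₂ := f) (homOfLE (hb (leOfHom f)))
      (homOfLE (hle Y)) hg hf (by apply Subsingleton.elim)
    have comp' : F.map (homOfLE (hb (hb (leOfHom f)))).op (x g hg)
        = F.map (homOfLE (hb (hle Y))).op (x f hf) := comp
    have comp'' := congrArg (F.map (homOfLE (le_of_eq (hidem Y).symm)).op) comp'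
    erw [res_res, res_res, res_self] at comp''
    show F.map (homOfLE (hb (leOfHom f))).op
        (F.map (homOfLE (le_of_eq (hidem X).symm)).op (x g hg)) = x f hf
    erw [res_res]
    exact comp''
  · intro y hy
    have h1 : F.map (homOfLE (hb (hle X))).op y = x g hg := hy g hg
    have h2 := congrArg (F.map (homOfLE (le_of_eq (hidem X).symm)).op) h1
    erw [res_res, res_self] at h2
    exact h2
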